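/- Delta of the Black–Scholes–Margrabe price: fix κ > 0 and v > 0, and define C : (0, ∞) → ℝ by C(x) = x·Φ⁰₊(κ, v, x) − κ·Φ⁰₋(κ, v, x). Then for every x > 0, C is differentiable at x with derivative C′(x) = Φ⁰₊(κ, v, x); that is, the function x ↦ x·Φ(log(x/κ)/v + v/2) − κ·Φ(log(x/κ)/v − v/2) has derivative Φ(log(x/κ)/v + v/2) at every x > 0. -/

import Mathlib

open MeasureTheory Real

/-- The standard normal cumulative distribution function. -/
noncomputable def Phi (x : ℝ) : ℝ :=
  ∫ z in Set.Iic x, Real.exp (-z^2/2) / Real.sqrt (2 * Real.pi)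

noncomputable def phiPDF (z : ℝ) : ℝ := Real.exp (-z^2/2) / Real.sqrt (2 * Real.pi)

lemma phiPDF_integrable : MeasureTheory.Integrable phiPDF := by
  have h : MeasureTheory.Integrable (fun z : ℝ => Real.exp (-(1/2 : ℝ) * z ^ 2)) :=
    integrable_exp_neg_mul_sq (by norm_num)
  have := h.div_const (Real.sqrt (2 * Real.pi))
  convert this using 2 with z
  unfold phiPDF
  ring_nf

lemma phiPDF_continuous : Continuous phiPDF := by
  unfold phiPDF
  fun_prop

lemma hasDerivAt_Phi (x : ℝ) : HasDerivAt Phi (phiPDF x) x := by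
  have key : ∀ y : ℝ, Phi y = Phi 0 + ∫ z in (0:ℝ)..y, phiPDF z := by
    intro y
    have := intervalIntegral.integral_Iic_sub_Iic (μ := volume) (f := phiPDF)
      (phiPDF_integrable.integrableOn) (phiPDF_integrable.integrableOn) (a := 0) (b := y)
    simp only [Phi, phiPDF] at this ⊢
    linarith
  have h1 : HasDerivAt (fun y => Phi 0 + ∫ z in (0:ℝ)..y, phiPDF z) (phiPDF x) x := by
    have := (intervalIntegral.integral_hasDerivAt_right (f := phiPDF) (a := 0) (b := x)
      phiPDF_integrable.intervalIntegrable
      phiPDF_continuous.aestronglyMeasurable.stronglyMeasurableAtFilter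
      phiPDF_continuous.continuousAt)
    exact this.const_add (Phi 0)
  exact h1.congr_of_eventuallyEq (Filter.Eventually.of_forall key)

/-- Delta of the Black–Scholes–Margrabe price: for `κ, v > 0`, the function
`x ↦ x·Φ(log(x/κ)/v + v/2) − κ·Φ(log(x/κ)/v − v/2)` is differentiable at every `x > 0`
with derivative `Φ(log(x/κ)/v + v/2)`. -/
theorem black_scholes_margrabe_delta {κ v : ℝ} (hκ : 0 < κ) (hv : 0 < v)
    {x : ℝ} (hx : 0 < x) :
    HasDerivAt
      (fun y => y * Phi (Real.log (y / κ) / v + v / 2)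
                 - κ * Phi (Real.log (y / κ) / v - v / 2))
      (Phi (Real.log (x / κ) / v + v / 2)) x := by
  have hxne : x ≠ 0 := hx.ne'
  have hvne : v ≠ 0 := hv.ne'
  set d : ℝ := Real.log (x / κ) / v with hd
  -- derivative of y ↦ log (y/κ) / v
  have hlog : HasDerivAt (fun y : ℝ => Real.log (y / κ) / v) (1 / (x * v)) x := by
    have h1 : HasDerivAt (fun y : ℝ => Real.log (y / κ)) (1 / x) x := by
      have h0 : HasDerivAt (fun y : ℝ => Real.log y - Real.log κ) (1 / x) x := by
        simpa [one_div] using (Real.hasDerivAt_log hxne).sub_const (Real.log κ)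
      refine h0.congr_of_eventuallyEq ?_
      filter_upwards [eventually_ne_nhds hxne] with y hy
      rw [Real.log_div hy hκ.ne']
    have := h1.div_const v
    refine this.congr_deriv ?_
    ring
  have hplus : HasDerivAt (fun y : ℝ => Real.log (y / κ) / v + v / 2) (1 / (x * v)) x :=
    hlog.add_const _
  have hminus : HasDerivAt (fun y : ℝ => Real.log (y / κ) / v - v / 2) (1 / (x * v)) x :=
    hlog.sub_const _
  have hP : HasDerivAt (fun y => Phi (Real.log (y / κ) / v + v / 2))
      (phiPDF (d + v / 2) * (1 / (x * v))) x :=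
    by have := (hasDerivAt_Phi (d + v / 2)).comp x hplus; exact this
  have hM : HasDerivAt (fun y => Phi (Real.log (y / κ) / v - v / 2))
      (phiPDF (d - v / 2) * (1 / (x * v))) x :=
    by have := (hasDerivAt_Phi (d - v / 2)).comp x hminus; exact this
  have hmul : HasDerivAt (fun y => y * Phi (Real.log (y / κ) / v + v / 2))
      (1 * Phi (d + v / 2) + x * (phiPDF (d + v / 2) * (1 / (x * v)))) x :=
    (hasDerivAt_id x).mul hP
  have htot := hmul.sub (hM.const_mul κ)
  -- key identity: x * phiPDF (d + v/2) = κ * phiPDF (d - v/2)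
  have hkey : x * phiPDF (d + v / 2) = κ * phiPDF (d - v / 2) := by
    unfold phiPDF
    have hdv : d * v = Real.log (x / κ) := by rw [hd]; field_simp
    have hexp : Real.exp (-(d + v/2)^2/2) = Real.exp (-(d - v/2)^2/2) * (κ / x) := by
      rw [← Real.exp_log (show (0:ℝ) < κ / x from div_pos hκ hx), ← Real.exp_add]
      congr 1
      have : Real.log (κ / x) = - (d * v) := by
        rw [hdv, ← Real.log_inv, inv_div]
      rw [this]; ring
    rw [hexp]
    field_simp
  have hcancel : x * (phiPDF (d + v / 2) * (1 / (x * v)))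
      = κ * (phiPDF (d - v / 2) * (1 / (x * v))) := by
    rw [← mul_assoc, ← mul_assoc, hkey]
  refine htot.congr_deriv ?_
  rw [hcancel]
  ring
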